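/- If X is a normal T1 (i.e. T4) topological space, then the Vietoris hyperspace of closed subsets of X is regular. -/

import Mathlib

open TopologicalSpace Set

/-- The Vietoris topology on the hyperspace of closed subsets, generated by the sets
`□U = {a | ↑a ⊆ U}` and `◇U = {a | (↑a ∩ U).Nonempty}` for `U` open. -/
instance vietoris (X : Type*) [TopologicalSpace X] : TopologicalSpace (Closeds X) :=
  generateFrom
    ({s | ∃ U : Set X, IsOpen U ∧ s = {a : Closeds X | (a : Set X) ⊆ U}} ∪
     {s | ∃ U : Set X, IsOpen U ∧ s = {a : Closeds X | ((a : Set X) ∩ U).Nonempty}})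

section Aux

variable {X : Type*} [TopologicalSpace X]

lemma vietoris_isOpen_box {U : Set X} (hU : IsOpen U) :
    IsOpen {a : Closeds X | (a : Set X) ⊆ U} :=
  TopologicalSpace.GenerateOpen.basic _ (Or.inl ⟨U, hU, rfl⟩)

lemma vietoris_isOpen_dia {U : Set X} (hU : IsOpen U) :
    IsOpen {a : Closeds X | ((a : Set X) ∩ U).Nonempty} :=
  TopologicalSpace.GenerateOpen.basic _ (Or.inr ⟨U, hU, rfl⟩)

lemma vietoris_isClosed_box {K : Set X} (hK : IsClosed K) :
    IsClosed {a : Closeds X | (a : Set X) ⊆ K} := by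
  rw [← isOpen_compl_iff]
  have : {a : Closeds X | (a : Set X) ⊆ K}ᶜ
      = {a : Closeds X | ((a : Set X) ∩ Kᶜ).Nonempty} := by
    ext a
    simp [Set.not_subset, Set.inter_nonempty]
  rw [this]
  exact vietoris_isOpen_dia hK.isOpen_compl

lemma vietoris_isClosed_dia {K : Set X} (hK : IsClosed K) :
    IsClosed {a : Closeds X | ((a : Set X) ∩ K).Nonempty} := by
  rw [← isOpen_compl_iff]
  have : {a : Closeds X | ((a : Set X) ∩ K).Nonempty}ᶜ
      = {a : Closeds X | (a : Set X) ⊆ Kᶜ} := by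
    ext a
    simp [Set.not_nonempty_iff_eq_empty, ← Set.disjoint_iff_inter_eq_empty,
      Set.disjoint_compl_right_iff_subset, Set.subset_compl_iff_disjoint_right,
      Set.disjoint_right]
  rw [this]
  exact vietoris_isOpen_box hK.isOpen_compl

lemma vietoris_key [T1Space X] [NormalSpace X] {t : Set (Closeds X)}
    (ht : TopologicalSpace.GenerateOpen
      ({s | ∃ U : Set X, IsOpen U ∧ s = {a : Closeds X | (a : Set X) ⊆ U}} ∪
       {s | ∃ U : Set X, IsOpen U ∧ s = {a : Closeds X | ((a : Set X) ∩ U).Nonempty}}) t) :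
    ∀ a ∈ t, ∃ c ∈ nhds a, IsClosed c ∧ c ⊆ t := by
  haveI : T4Space X := ⟨⟩
  induction ht with
  | basic u hu =>
    rcases hu with ⟨U, hU, rfl⟩ | ⟨U, hU, rfl⟩
    · -- box case
      intro a ha
      obtain ⟨W, hW, haW, hWU⟩ := normal_exists_closure_subset a.isClosed hU ha
      refine ⟨{b : Closeds X | (b : Set X) ⊆ closure W}, ?_, vietoris_isClosed_box isClosed_closure,
        fun b hb => hb.trans hWU⟩
      exact Filter.mem_of_superset ((vietoris_isOpen_box hW).mem_nhds haW)
        (fun b hb => hb.trans subset_closure)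
    · -- diamond case
      intro a ha
      obtain ⟨x, hxa, hxU⟩ := ha
      obtain ⟨K, hK, hKc, hKU⟩ := exists_mem_nhds_isClosed_subset (hU.mem_nhds hxU)
      refine ⟨{b : Closeds X | ((b : Set X) ∩ K).Nonempty}, ?_, vietoris_isClosed_dia hKc,
        fun b ⟨y, hy1, hy2⟩ => ⟨y, hy1, hKU hy2⟩⟩
      refine Filter.mem_of_superset
        ((vietoris_isOpen_dia isOpen_interior).mem_nhds ⟨x, hxa, mem_interior_iff_mem_nhds.2 hK⟩)
        (fun b ⟨y, hy1, hy2⟩ => ⟨y, hy1, interior_subset hy2⟩)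
  | univ => exact fun a _ => ⟨Set.univ, Filter.univ_mem, isClosed_univ, subset_rfl⟩
  | inter t₁ t₂ h₁ h₂ ih₁ ih₂ =>
    intro a ha
    obtain ⟨c₁, hc₁, hc₁c, hc₁s⟩ := ih₁ a ha.1
    obtain ⟨c₂, hc₂, hc₂c, hc₂s⟩ := ih₂ a ha.2
    exact ⟨c₁ ∩ c₂, Filter.inter_mem hc₁ hc₂, hc₁c.inter hc₂c,
      fun b hb => ⟨hc₁s hb.1, hc₂s hb.2⟩⟩
  | sUnion S hS ih =>
    intro a ha
    obtain ⟨t, htS, hat⟩ := ha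
    obtain ⟨c, hc, hcc, hcs⟩ := ih t htS a hat
    exact ⟨c, hc, hcc, hcs.trans (Set.subset_sUnion_of_mem htS)⟩

end Aux

theorem closeds_regular_of_t4 {X : Type*} [TopologicalSpace X] [T1Space X] [NormalSpace X] :
    RegularSpace (Closeds X) := by
  apply RegularSpace.of_exists_mem_nhds_isClosed_subset
  intro a s hs
  obtain ⟨t, hts, ht, hat⟩ := mem_nhds_iff.mp hs
  obtain ⟨c, hc, hcc, hcs⟩ := vietoris_key ht a hat
  exact ⟨c, hc, hcc, hcs.trans hts⟩
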